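/- Let A ∈ ℝ^{m×N} satisfy the weighted block RIP of order 2s with constant δ_{2s}, with respect to a block structure B and weights ω_i ≥ 1, where s ≥ 2‖ω‖_∞². If δ_{2s} < 1/(2√2 + 1), then A satisfies the ℓ_ω^2-BRNSP of order s with constants ρ = 2√2 δ_{2s}/(1 − δ_{2s}) ∈ (0,1) and τ = √(1+δ_{2s})/(1 − δ_{2s}). -/

import Mathlib

open Finset

noncomputable def l2 {n : Type*} [Fintype n] (v : n → ℝ) : ℝ := Real.sqrt (∑ i, (v i) ^ 2)

variable {B : ℕ} {d : Fin B → ℕ}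

/-- ℓ² norm of the block `b` of the block vector `x`. -/
noncomputable def bn (x : ((b : Fin B) × Fin (d b)) → ℝ) (b : Fin B) : ℝ :=
  Real.sqrt (∑ i : Fin (d b), (x ⟨b, i⟩) ^ 2)

/-- Weighted block ℓ¹ norm `‖x‖_{2,1}^{(ω)}`. -/
noncomputable def n21 (ω : Fin B → ℝ) (x : ((b : Fin B) × Fin (d b)) → ℝ) : ℝ :=
  ∑ b, ω b * bn x b

/-- Weighted block (2,p) norm `‖x‖_{2,p}^{(ω)}` (real exponents). -/
noncomputable def n2p (ω : Fin B → ℝ) (p : ℝ) (x : ((b : Fin B) × Fin (d b)) → ℝ) : ℝ :=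
  (∑ b, ω b ^ (2 - p) * bn x b ^ p) ^ (1 / p)

/-- Restriction of `x` to the blocks in `S` (zero outside). -/
def rs (S : Finset (Fin B)) (x : ((b : Fin B) × Fin (d b)) → ℝ) :
    ((b : Fin B) × Fin (d b)) → ℝ :=
  fun j => if j.1 ∈ S then x j else 0

/-- Weighted cardinality `ω(S) = ∑_{b∈S} ω_b²`. -/
def wCard (ω : Fin B → ℝ) (S : Finset (Fin B)) : ℝ := ∑ b ∈ S, ω b ^ 2

/-- Weighted block sparsity `‖x‖₀^{(ω)}`. -/
noncomputable def wspar (ω : Fin B → ℝ) (x : ((b : Fin B) × Fin (d b)) → ℝ) : ℝ :=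
  ∑ b, if bn x b = 0 then 0 else ω b ^ 2

/-- Best weighted `s`-block approximation error in the `‖·‖_{2,1}^{(ω)}` norm. -/
noncomputable def sigmaS (ω : Fin B → ℝ) (s : ℝ) (x : ((b : Fin B) × Fin (d b)) → ℝ) : ℝ :=
  sInf {t | ∃ z, wspar ω z ≤ s ∧ t = n21 ω (x - z)}

/-- Weighted block restricted isometry property of order `t` with constant `δ`. -/
noncomputable def WBRIP {m : ℕ} (A : Matrix (Fin m) ((b : Fin B) × Fin (d b)) ℝ)
    (ω : Fin B → ℝ) (t δ : ℝ) : Prop :=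
  ∀ x : ((b : Fin B) × Fin (d b)) → ℝ, wspar ω x ≤ t →
    (1 - δ) * l2 x ^ 2 ≤ l2 (A.mulVec x) ^ 2 ∧ l2 (A.mulVec x) ^ 2 ≤ (1 + δ) * l2 x ^ 2

-- inner product
noncomputable def ip {n : Type*} [Fintype n] (x y : n → ℝ) : ℝ := ∑ i, x i * y i

lemma l2_nonneg {n : Type*} [Fintype n] (x : n → ℝ) : 0 ≤ l2 x := Real.sqrt_nonneg _

lemma l2_sq {n : Type*} [Fintype n] (x : n → ℝ) : l2 x ^ 2 = ∑ i, x i ^ 2 :=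
  Real.sq_sqrt (by positivity)

lemma l2_sq_eq_ip {n : Type*} [Fintype n] (x : n → ℝ) : l2 x ^ 2 = ip x x := by
  rw [l2_sq]; unfold ip; exact Finset.sum_congr rfl fun i _ => sq (x i)

lemma l2_eq_zero {n : Type*} [Fintype n] {x : n → ℝ} (h : l2 x = 0) : x = 0 := by
  funext i
  have h0 : (∑ i, x i ^ 2) = 0 := by
    have := Real.sqrt_eq_zero (by positivity : (0:ℝ) ≤ ∑ i, x i ^ 2) |>.mp h
    exact this
  have := (Finset.sum_eq_zero_iff_of_nonneg (fun i _ => sq_nonneg (x i))).mp h0 i (Finset.mem_univ i)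
  simpa using pow_eq_zero_iff (n := 2) (by norm_num) |>.mp this

lemma ip_le {n : Type*} [Fintype n] (x y : n → ℝ) : ip x y ≤ l2 x * l2 y :=
  Real.sum_mul_le_sqrt_mul_sqrt _ _ _

lemma ip_neg_right {n : Type*} [Fintype n] (x y : n → ℝ) : ip x (-y) = - ip x y := by
  unfold ip; simp [Finset.sum_neg_distrib]

lemma l2_neg {n : Type*} [Fintype n] (y : n → ℝ) : l2 (-y) = l2 y := by
  unfold l2; congr 1; exact Finset.sum_congr rfl fun i _ => by simp

lemma abs_ip_le {n : Type*} [Fintype n] (x y : n → ℝ) : |ip x y| ≤ l2 x * l2 y := by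
  rw [abs_le]
  constructor
  · have := ip_le x (-y); rw [ip_neg_right, l2_neg] at this; linarith
  · exact ip_le x y

lemma ip_add_left {n : Type*} [Fintype n] (x y z : n → ℝ) :
    ip (x + y) z = ip x z + ip y z := by
  unfold ip; rw [← Finset.sum_add_distrib]; exact Finset.sum_congr rfl fun i _ => by
    simp [add_mul]

lemma ip_add_right {n : Type*} [Fintype n] (x y z : n → ℝ) :
    ip x (y + z) = ip x y + ip x z := by
  unfold ip; rw [← Finset.sum_add_distrib]; exact Finset.sum_congr rfl fun i _ => by
    simp [mul_add]

lemma ip_sub_right {n : Type*} [Fintype n] (x y z : n → ℝ) :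
    ip x (y - z) = ip x y - ip x z := by
  unfold ip; rw [← Finset.sum_sub_distrib]; exact Finset.sum_congr rfl fun i _ => by
    simp [mul_sub]

lemma ip_smul_smul {n : Type*} [Fintype n] (a c : ℝ) (x y : n → ℝ) :
    ip (a • x) (c • y) = a * c * ip x y := by
  unfold ip; rw [Finset.mul_sum]; exact Finset.sum_congr rfl fun i _ => by
    simp; ring

lemma l2_smul_sq {n : Type*} [Fintype n] (a : ℝ) (x : n → ℝ) :
    l2 (a • x) ^ 2 = a ^ 2 * l2 x ^ 2 := by
  rw [l2_sq, l2_sq, Finset.mul_sum]; exact Finset.sum_congr rfl fun i _ => by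
    simp [mul_pow]

lemma le_of_sq_le_sq' {a b : ℝ} (hb : 0 ≤ b) (h : a ^ 2 ≤ b ^ 2) (ha : 0 ≤ a) : a ≤ b := by
  nlinarith

-- block lemmas
lemma bn_nonneg (x : ((b : Fin B) × Fin (d b)) → ℝ) (b : Fin B) : 0 ≤ bn x b :=
  Real.sqrt_nonneg _

lemma bn_sq (x : ((b : Fin B) × Fin (d b)) → ℝ) (b : Fin B) :
    bn x b ^ 2 = ∑ i : Fin (d b), (x ⟨b, i⟩) ^ 2 := Real.sq_sqrt (by positivity)

lemma bn_eq_zero_iff (x : ((b : Fin B) × Fin (d b)) → ℝ) (b : Fin B) :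
    bn x b = 0 ↔ ∀ i, x ⟨b, i⟩ = 0 := by
  unfold bn
  rw [Real.sqrt_eq_zero (by positivity)]
  rw [Finset.sum_eq_zero_iff_of_nonneg (fun i _ => sq_nonneg _)]
  constructor
  · intro h i; have := h i (Finset.mem_univ i); simpa using pow_eq_zero_iff (n := 2) (by norm_num) |>.mp this
  · intro h i _; rw [h i]; simp

lemma l2_sq_blocks (x : ((b : Fin B) × Fin (d b)) → ℝ) :
    l2 x ^ 2 = ∑ b, bn x b ^ 2 := by
  rw [l2_sq]
  rw [← Finset.univ_sigma_univ, Finset.sum_sigma]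
  exact Finset.sum_congr rfl fun b _ => (bn_sq x b).symm

lemma bn_rs (S : Finset (Fin B)) (x : ((b : Fin B) × Fin (d b)) → ℝ) (b : Fin B) :
    bn (rs S x) b = if b ∈ S then bn x b else 0 := by
  unfold bn rs
  split_ifs with h
  · simp [h]
  · simp [h]

lemma l2_rs_sq (S : Finset (Fin B)) (v : ((b : Fin B) × Fin (d b)) → ℝ) :
    l2 (rs S v) ^ 2 = ∑ b ∈ S, bn v b ^ 2 := by
  rw [l2_sq_blocks]
  have h : ∀ b, bn (rs S v) b ^ 2 = if b ∈ S then bn v b ^ 2 else 0 := by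
    intro b; rw [bn_rs]; split_ifs <;> simp
  simp only [h]
  rw [Finset.sum_ite_mem, Finset.univ_inter]

lemma n21_nonneg (ω : Fin B → ℝ) (hω : ∀ b, 0 ≤ ω b) (x : ((b : Fin B) × Fin (d b)) → ℝ) :
    0 ≤ n21 ω x :=
  Finset.sum_nonneg fun b _ => mul_nonneg (hω b) (bn_nonneg x b)

lemma n21_rs (ω : Fin B → ℝ) (S : Finset (Fin B)) (v : ((b : Fin B) × Fin (d b)) → ℝ) :
    n21 ω (rs S v) = ∑ b ∈ S, ω b * bn v b := by
  unfold n21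
  have h : ∀ b, ω b * bn (rs S v) b = if b ∈ S then ω b * bn v b else 0 := by
    intro b; rw [bn_rs]; split_ifs <;> simp
  simp only [h]
  rw [Finset.sum_ite_mem, Finset.univ_inter]

-- rs algebra
lemma rs_union {S T : Finset (Fin B)} (h : Disjoint S T) (x : ((b : Fin B) × Fin (d b)) → ℝ) :
    rs (S ∪ T) x = rs S x + rs T x := by
  funext j
  simp only [rs, Pi.add_apply, Finset.mem_union]
  by_cases hS : j.1 ∈ S <;> by_cases hT : j.1 ∈ T
  · exact absurd (Finset.disjoint_left.mp h hS) (fun hc => hc hT)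
  · simp [hS, hT]
  · simp [hS, hT]
  · simp [hS, hT]

lemma ip_rs_disjoint {S T : Finset (Fin B)} (h : Disjoint S T)
    (x y : ((b : Fin B) × Fin (d b)) → ℝ) : ip (rs S x) (rs T y) = 0 := by
  unfold ip rs
  refine Finset.sum_eq_zero fun j _ => ?_
  by_cases hS : j.1 ∈ S
  · have hT : j.1 ∉ T := fun hc => Finset.disjoint_left.mp h hS hc
    simp [hS, hT]
  · simp [hS]

lemma l2_rs_union_sq {S T : Finset (Fin B)} (h : Disjoint S T)
    (x : ((b : Fin B) × Fin (d b)) → ℝ) :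
    l2 (rs (S ∪ T) x) ^ 2 = l2 (rs S x) ^ 2 + l2 (rs T x) ^ 2 := by
  rw [rs_union h, l2_sq_eq_ip, ip_add_left, ip_add_right, ip_add_right,
    ip_rs_disjoint h, l2_sq_eq_ip, l2_sq_eq_ip]
  have : ip (rs T x) (rs S x) = 0 := ip_rs_disjoint h.symm x x
  rw [this]
  ring

-- wspar
lemma wspar_le_wCard {ω : Fin B → ℝ} (hω : ∀ b, 0 ≤ ω b) {x : ((b : Fin B) × Fin (d b)) → ℝ}
    {E : Finset (Fin B)} (h : ∀ b, b ∉ E → bn x b = 0) : wspar ω x ≤ wCard ω E := by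
  unfold wspar wCard
  have h1 : (∑ b, if bn x b = 0 then 0 else ω b ^ 2)
      = ∑ b ∈ E, if bn x b = 0 then 0 else ω b ^ 2 := by
    symm
    refine Finset.sum_subset (Finset.subset_univ E) fun b _ hb => ?_
    simp [h b hb]
  rw [h1]
  refine Finset.sum_le_sum fun b _ => ?_
  split_ifs
  · positivity
  · exact le_refl _

lemma rip_upper_sqrt {m : ℕ} {A : Matrix (Fin m) ((b : Fin B) × Fin (d b)) ℝ}
    {ω : Fin B → ℝ} {t δ : ℝ} (hδ : 0 ≤ δ) (hRIP : WBRIP A ω t δ)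
    {x : ((b : Fin B) × Fin (d b)) → ℝ} (hx : wspar ω x ≤ t) :
    l2 (A.mulVec x) ≤ Real.sqrt (1 + δ) * l2 x := by
  have h := (hRIP x hx).2
  refine le_of_sq_le_sq' (mul_nonneg (Real.sqrt_nonneg _) (l2_nonneg _)) ?_ (l2_nonneg _)
  rw [mul_pow, Real.sq_sqrt (by linarith)]
  exact h

lemma wspar_combo_le {ω : Fin B → ℝ} (hω : ∀ b, 0 ≤ ω b) {S T : Finset (Fin B)}
    (a c : ℝ) (x y : ((b : Fin B) × Fin (d b)) → ℝ) :
    wspar ω (a • rs S x + c • rs T y) ≤ wCard ω (S ∪ T) := by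
  refine wspar_le_wCard hω fun b hb => ?_
  rw [bn_eq_zero_iff]
  intro i
  simp only [Finset.mem_union, not_or] at hb
  simp [rs, Pi.add_apply, Pi.smul_apply, hb.1, hb.2]

/-- Polarization: inner products of images of disjointly supported sparse vectors. -/
lemma polarization {m : ℕ} {A : Matrix (Fin m) ((b : Fin B) × Fin (d b)) ℝ}
    {ω : Fin B → ℝ} {t δ : ℝ} (hδ : 0 ≤ δ) (hω : ∀ b, 0 ≤ ω b) (hRIP : WBRIP A ω t δ)
    {S T : Finset (Fin B)} (hd : Disjoint S T) (hST : wCard ω S + wCard ω T ≤ t)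
    (x y : ((b : Fin B) × Fin (d b)) → ℝ) :
    |ip (A.mulVec (rs S x)) (A.mulVec (rs T y))| ≤ δ * l2 (rs S x) * l2 (rs T y) := by
  set u := rs S x with hu
  set w := rs T y with hw
  by_cases hu0 : l2 u = 0
  · have h0 : u = 0 := l2_eq_zero hu0
    rw [h0, Matrix.mulVec_zero]
    have h1 : ip (0 : Fin m → ℝ) (A.mulVec w) = 0 := by simp [ip]
    rw [h1, abs_zero]
    exact mul_nonneg (mul_nonneg hδ (l2_nonneg _)) (l2_nonneg _)
  by_cases hw0 : l2 w = 0
  · have h0 : w = 0 := l2_eq_zero hw0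
    rw [h0, Matrix.mulVec_zero]
    have h1 : ip (A.mulVec u) (0 : Fin m → ℝ) = 0 := by simp [ip]
    rw [h1, abs_zero]
    exact mul_nonneg (mul_nonneg hδ (l2_nonneg _)) (l2_nonneg _)
  have hupos : 0 < l2 u := lt_of_le_of_ne (l2_nonneg u) (Ne.symm hu0)
  have hwpos : 0 < l2 w := lt_of_le_of_ne (l2_nonneg w) (Ne.symm hw0)
  set a := (l2 u)⁻¹ with ha
  set c := (l2 w)⁻¹ with hc
  have hwc : wCard ω (S ∪ T) = wCard ω S + wCard ω T := Finset.sum_union hd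
  have hsp1 : wspar ω (a • u + c • w) ≤ t := by
    calc wspar ω (a • u + c • w) ≤ wCard ω (S ∪ T) := wspar_combo_le hω a c x y
    _ = wCard ω S + wCard ω T := hwc
    _ ≤ t := hST
  have hsp2 : wspar ω (a • u + (-c) • w) ≤ t := by
    calc wspar ω (a • u + (-c) • w) ≤ wCard ω (S ∪ T) := wspar_combo_le hω a (-c) x y
    _ = wCard ω S + wCard ω T := hwc
    _ ≤ t := hST
  have hipuw : ip u w = 0 := ip_rs_disjoint hd x y
  have hipwu : ip w u = 0 := ip_rs_disjoint hd.symm y x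
  have hcombo : ∀ e : ℝ, l2 (a • u + e • w) ^ 2 = a ^ 2 * l2 u ^ 2 + e ^ 2 * l2 w ^ 2 := by
    intro e
    rw [l2_sq_eq_ip, ip_add_left, ip_add_right, ip_add_right, ip_smul_smul, ip_smul_smul,
      ip_smul_smul, ip_smul_smul, hipuw, hipwu, l2_sq_eq_ip, l2_sq_eq_ip]
    ring
  have hval : ∀ e : ℝ, e ^ 2 = c ^ 2 → l2 (a • u + e • w) ^ 2 = 2 := by
    intro e he
    rw [hcombo e, he, ha, hc]
    field_simp
    norm_num
  have h2 : l2 (a • u + c • w) ^ 2 = 2 := hval c rfl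
  have h3 : l2 (a • u + (-c) • w) ^ 2 = 2 := hval (-c) (by ring)
  have hub1 := (hRIP _ hsp1).2
  have hlb1 := (hRIP _ hsp1).1
  have hub2 := (hRIP _ hsp2).2
  have hlb2 := (hRIP _ hsp2).1
  rw [h2] at hub1 hlb1
  rw [h3] at hub2 hlb2
  have himg : ∀ e : ℝ, l2 (A.mulVec (a • u + e • w)) ^ 2
      = a ^ 2 * l2 (A.mulVec u) ^ 2 + 2 * (a * e) * ip (A.mulVec u) (A.mulVec w)
        + e ^ 2 * l2 (A.mulVec w) ^ 2 := by
    intro e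
    rw [Matrix.mulVec_add, Matrix.mulVec_smul, Matrix.mulVec_smul]
    rw [l2_sq_eq_ip, ip_add_left, ip_add_right, ip_add_right, ip_smul_smul, ip_smul_smul,
      ip_smul_smul, ip_smul_smul, l2_sq_eq_ip, l2_sq_eq_ip]
    have : ip (A.mulVec w) (A.mulVec u) = ip (A.mulVec u) (A.mulVec w) :=
      Finset.sum_congr rfl fun j _ => mul_comm _ _
    rw [this]
    ring
  rw [himg c] at hub1 hlb1
  rw [himg (-c)] at hub2 hlb2
  have key : a * c * |ip (A.mulVec u) (A.mulVec w)| ≤ δ := by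
    rcases abs_cases (ip (A.mulVec u) (A.mulVec w)) with ⟨he, _⟩ | ⟨he, _⟩ <;> rw [he] <;>
      nlinarith [hub1, hlb1, hub2, hlb2]
  have hac : 0 < a * c := mul_pos (inv_pos.mpr hupos) (inv_pos.mpr hwpos)
  have step : |ip (A.mulVec u) (A.mulVec w)| ≤ δ / (a * c) :=
    (le_div_iff₀ hac).mpr (by linarith [key])
  have hfin : δ / (a * c) = δ * l2 u * l2 w := by
    rw [ha, hc]
    field_simp
  rw [hfin] at step
  exact step

-- chunking
def lw (ω : Fin B → ℝ) (P : List (Fin B)) : ℝ := (P.map fun b => ω b ^ 2).sum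

noncomputable def chunk1 (ω : Fin B → ℝ) : List (Fin B) → ℝ → List (Fin B) × List (Fin B)
  | [] => fun _ => ([], [])
  | a :: l => fun h =>
    if h ≤ ω a ^ 2 then ([a], l)
    else (a :: (chunk1 ω l (h - ω a ^ 2)).1, (chunk1 ω l (h - ω a ^ 2)).2)

@[simp] lemma chunk1_nil (ω : Fin B → ℝ) (h : ℝ) : chunk1 ω [] h = ([], []) := rfl

lemma chunk1_cons (ω : Fin B → ℝ) (a : Fin B) (l : List (Fin B)) (h : ℝ) :
    chunk1 ω (a :: l) h = if h ≤ ω a ^ 2 then ([a], l)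
      else (a :: (chunk1 ω l (h - ω a ^ 2)).1, (chunk1 ω l (h - ω a ^ 2)).2) := rfl

lemma chunk1_append (ω : Fin B → ℝ) : ∀ (l : List (Fin B)) (h : ℝ),
    (chunk1 ω l h).1 ++ (chunk1 ω l h).2 = l := by
  intro l
  induction l with
  | nil => simp
  | cons a t ih =>
    intro h
    rw [chunk1_cons]
    split_ifs with hc
    · simp
    · simp [ih]

lemma chunk1_snd_length (ω : Fin B → ℝ) : ∀ (l : List (Fin B)) (h : ℝ),
    (chunk1 ω l h).2.length ≤ l.length := by
  intro l
  induction l with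
  | nil => intro h; simp
  | cons a t ih =>
    intro h
    rw [chunk1_cons]
    split_ifs with hc
    · simp
    · simpa using le_trans (ih (h - ω a ^ 2)) (Nat.le_succ _)

lemma chunk1_snd_lt (ω : Fin B → ℝ) {l : List (Fin B)} (hl : l ≠ []) (h : ℝ) :
    (chunk1 ω l h).2.length < l.length := by
  cases l with
  | nil => exact absurd rfl hl
  | cons a t =>
    rw [chunk1_cons]
    split_ifs with hc
    · simp
    · simpa using Nat.lt_succ_of_le (chunk1_snd_length ω t (h - ω a ^ 2))

lemma chunk1_weight_le (ω : Fin B → ℝ) (M : ℝ) (hM : 0 ≤ M) (hb : ∀ b, ω b ^ 2 ≤ M) :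
    ∀ (l : List (Fin B)) (h : ℝ), 0 ≤ h → lw ω (chunk1 ω l h).1 ≤ h + M := by
  intro l
  induction l with
  | nil => intro h hh; simp [lw]; linarith
  | cons a t ih =>
    intro h hh
    rw [chunk1_cons]
    split_ifs with hc
    · simp [lw]; linarith [hb a]
    · push_neg at hc
      have := ih (h - ω a ^ 2) (by linarith)
      simp only [lw, List.map_cons, List.sum_cons] at this ⊢
      linarith

lemma chunk1_full (ω : Fin B → ℝ) : ∀ (l : List (Fin B)) (h : ℝ),
    (chunk1 ω l h).2 ≠ [] → h ≤ lw ω (chunk1 ω l h).1 := by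
  intro l
  induction l with
  | nil => intro h hne; simp at hne
  | cons a t ih =>
    intro h hne
    rw [chunk1_cons] at hne ⊢
    split_ifs with hc
    · simp [lw]; linarith
    · rw [if_neg hc] at hne
      simp only at hne
      have := ih (h - ω a ^ 2) hne
      simp only [lw, List.map_cons, List.sum_cons] at this ⊢
      linarith

noncomputable def chunks (ω : Fin B → ℝ) (h : ℝ) : List (Fin B) → List (List (Fin B))
  | [] => []
  | a :: l => (chunk1 ω (a :: l) h).1 :: chunks ω h (chunk1 ω (a :: l) h).2
termination_by l => l.length
decreasing_by exact chunk1_snd_lt ω (by simp) h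

lemma chunks_nil (ω : Fin B → ℝ) (h : ℝ) : chunks ω h [] = [] := by rw [chunks]

lemma chunks_cons (ω : Fin B → ℝ) (h : ℝ) (a : Fin B) (l : List (Fin B)) :
    chunks ω h (a :: l) = (chunk1 ω (a :: l) h).1 :: chunks ω h (chunk1 ω (a :: l) h).2 := by
  rw [chunks]

lemma chunks_join (ω : Fin B → ℝ) (h : ℝ) (l : List (Fin B)) :
    (chunks ω h l).flatten = l := by
  suffices H : ∀ (n : ℕ) (l : List (Fin B)), l.length = n → (chunks ω h l).flatten = l from
    H _ l rfl
  intro n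
  induction n using Nat.strong_induction_on with
  | _ n IH =>
    intro l hn
    cases l with
    | nil => simp [chunks_nil]
    | cons a t =>
      rw [chunks_cons]
      show (chunk1 ω (a :: t) h).1 ++ (chunks ω h (chunk1 ω (a :: t) h).2).flatten = a :: t
      have hlt := chunk1_snd_lt ω (l := a :: t) (by simp) h
      rw [IH _ (hn ▸ hlt) _ rfl]
      exact chunk1_append ω (a :: t) h

lemma chunks_weight (ω : Fin B → ℝ) (M : ℝ) (hM : 0 ≤ M) (hb : ∀ b, ω b ^ 2 ≤ M)
    (h : ℝ) (hh : 0 ≤ h) (l : List (Fin B)) :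
    ∀ C ∈ chunks ω h l, lw ω C ≤ h + M := by
  suffices H : ∀ (n : ℕ) (l : List (Fin B)), l.length = n →
      ∀ C ∈ chunks ω h l, lw ω C ≤ h + M from H _ l rfl
  intro n
  induction n using Nat.strong_induction_on with
  | _ n IH =>
    intro l hn
    cases l with
    | nil => simp [chunks_nil]
    | cons a t =>
      rw [chunks_cons]
      intro C hC
      rcases List.mem_cons.mp hC with hC | hC
      · rw [hC]; exact chunk1_weight_le ω M hM hb (a :: t) h hh
      · have hlt := chunk1_snd_lt ω (l := a :: t) (by simp) h
        exact IH _ (hn ▸ hlt) _ rfl C hC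

lemma lw_toFinset {ω : Fin B → ℝ} {C : List (Fin B)} (hnd : C.Nodup) :
    ∑ b ∈ C.toFinset, ω b ^ 2 = lw ω C :=
  List.sum_toFinset _ hnd

lemma nsum_toFinset {ω : Fin B → ℝ} {v : ((b : Fin B) × Fin (d b)) → ℝ} {C : List (Fin B)}
    (hnd : C.Nodup) :
    ∑ b ∈ C.toFinset, ω b * bn v b = (C.map fun b => ω b * bn v b).sum :=
  List.sum_toFinset _ hnd

lemma chunk_norm_le {v : ((b : Fin B) × Fin (d b)) → ℝ} {ω : Fin B → ℝ}
    (hω : ∀ b, 1 ≤ ω b) {s mm : ℝ} (hs0 : 0 < s) (hmm : 0 ≤ mm)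
    {C : List (Fin B)} (hnd : C.Nodup) (hlw : lw ω C ≤ s)
    (hbd : ∀ b ∈ C, bn v b / ω b ≤ mm) :
    l2 (rs C.toFinset v) ≤ Real.sqrt s * mm := by
  refine le_of_sq_le_sq' (mul_nonneg (Real.sqrt_nonneg _) hmm) ?_ (l2_nonneg _)
  rw [mul_pow, Real.sq_sqrt hs0.le, l2_rs_sq]
  have hbnd : ∀ b ∈ C.toFinset, bn v b ^ 2 ≤ ω b ^ 2 * mm ^ 2 := by
    intro b hb
    have hbC := List.mem_toFinset.mp hb
    have hω0 : (0:ℝ) < ω b := lt_of_lt_of_le one_pos (hω b)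
    have h1 : bn v b = ω b * (bn v b / ω b) := by field_simp
    rw [h1, mul_pow]
    exact mul_le_mul_of_nonneg_left
      (pow_le_pow_left₀ (div_nonneg (bn_nonneg v b) hω0.le) (hbd b hbC) 2) (sq_nonneg _)
  calc ∑ b ∈ C.toFinset, bn v b ^ 2
      ≤ ∑ b ∈ C.toFinset, ω b ^ 2 * mm ^ 2 := Finset.sum_le_sum hbnd
    _ = (∑ b ∈ C.toFinset, ω b ^ 2) * mm ^ 2 := by rw [← Finset.sum_mul]
    _ = lw ω C * mm ^ 2 := by rw [lw_toFinset hnd]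
    _ ≤ s * mm ^ 2 := mul_le_mul_of_nonneg_right hlw (sq_nonneg mm)

lemma chunkSum_le {v : ((b : Fin B) × Fin (d b)) → ℝ} {ω : Fin B → ℝ}
    (hω : ∀ b, 1 ≤ ω b) {s : ℝ} (hs : ∀ b, 2 * ω b ^ 2 ≤ s) (hs0 : 0 < s) :
    ∀ (n : ℕ) (L : List (Fin B)), L.length = n → ∀ (mm : ℝ), 0 ≤ mm → L.Nodup →
      L.Pairwise (fun a b => bn v b / ω b ≤ bn v a / ω a) →
      (∀ b ∈ L, bn v b / ω b ≤ mm) →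
      ((chunks ω (s/2) L).map (fun C => l2 (rs C.toFinset v))).sum
        ≤ Real.sqrt s * mm + (2 / Real.sqrt s) * ∑ b ∈ L.toFinset, ω b * bn v b := by
  intro n
  induction n using Nat.strong_induction_on with
  | _ n IH =>
  intro L hn mm hmm hnd hpw hbd
  have hsq2 : ∀ b : Fin B, ω b ^ 2 ≤ s / 2 := fun b => by linarith [hs b]
  have hs20 : (0:ℝ) ≤ s / 2 := by linarith
  cases L with
  | nil =>
    rw [chunks_nil]
    simp only [List.map_nil, List.sum_nil, List.toFinset_nil, Finset.sum_empty, mul_zero,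
      add_zero]
    exact mul_nonneg (Real.sqrt_nonneg _) hmm
  | cons a t =>
    rw [chunks_cons, List.map_cons, List.sum_cons]
    set P := (chunk1 ω (a :: t) (s/2)).1 with hPdef
    set Q := (chunk1 ω (a :: t) (s/2)).2 with hQdef
    have happ : P ++ Q = a :: t := chunk1_append ω (a :: t) (s/2)
    have hndPQ : (P ++ Q).Nodup := by rw [happ]; exact hnd
    obtain ⟨hndP, hndQ, hdisjPQ⟩ := List.nodup_append.mp hndPQ
    have hpwPQ : (P ++ Q).Pairwise (fun a b => bn v b / ω b ≤ bn v a / ω a) := by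
      rw [happ]; exact hpw
    obtain ⟨hpwP, hpwQ, hcross⟩ := List.pairwise_append.mp hpwPQ
    have hmemP : ∀ b ∈ P, b ∈ a :: t := fun b hb => by
      rw [← happ]; exact List.mem_append.mpr (Or.inl hb)
    have hbdP : ∀ b ∈ P, bn v b / ω b ≤ mm := fun b hb => hbd b (hmemP b hb)
    have hlwP : lw ω P ≤ s := by
      have := chunk1_weight_le ω (s/2) hs20 hsq2 (a :: t) (s/2) hs20
      linarith
    have hPnorm : l2 (rs P.toFinset v) ≤ Real.sqrt s * mm :=
      chunk_norm_le hω hs0 hmm hndP hlwP hbdP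
    have hNQ0 : (0:ℝ) ≤ ∑ b ∈ Q.toFinset, ω b * bn v b :=
      Finset.sum_nonneg fun b _ => mul_nonneg (le_trans zero_le_one (hω b)) (bn_nonneg v b)
    have hNL : ∑ b ∈ (a :: t).toFinset, ω b * bn v b
        = (∑ b ∈ P.toFinset, ω b * bn v b) + ∑ b ∈ Q.toFinset, ω b * bn v b := by
      rw [← happ, List.toFinset_append]
      refine Finset.sum_union ?_
      rw [Finset.disjoint_left]
      intro b hbP hbQ
      exact hdisjPQ _ (List.mem_toFinset.mp hbP) _ (List.mem_toFinset.mp hbQ) rfl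
    by_cases hQnil : Q = []
    · rw [hQnil, chunks_nil]
      simp only [List.map_nil, List.sum_nil, add_zero]
      have hNP0 : (0:ℝ) ≤ ∑ b ∈ P.toFinset, ω b * bn v b :=
        Finset.sum_nonneg fun b _ => mul_nonneg (le_trans zero_le_one (hω b)) (bn_nonneg v b)
      have hsqs : (0:ℝ) < Real.sqrt s := Real.sqrt_pos.mpr hs0
      have : (0:ℝ) ≤ (2 / Real.sqrt s) * ∑ b ∈ (a :: t).toFinset, ω b * bn v b := by
        rw [hNL]
        positivity
      linarith
    · set NP := ∑ b ∈ P.toFinset, ω b * bn v b with hNPdef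
      have hNP0 : (0:ℝ) ≤ NP :=
        Finset.sum_nonneg fun b _ => mul_nonneg (le_trans zero_le_one (hω b)) (bn_nonneg v b)
      have hfull : s / 2 ≤ lw ω P := chunk1_full ω (a :: t) (s/2) hQnil
      have hNPr : ∀ q ∈ Q, bn v q / ω q ≤ 2 * NP / s := by
        intro q hq
        have hrq0 : 0 ≤ bn v q / ω q :=
          div_nonneg (bn_nonneg v q) (le_trans zero_le_one (hω q))
        have hkey : (s / 2) * (bn v q / ω q) ≤ NP := by
          have h1 : (lw ω P) * (bn v q / ω q) ≤ NP := by
            rw [hNPdef, ← lw_toFinset hndP, Finset.sum_mul]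
            refine Finset.sum_le_sum fun b hb => ?_
            have hbP := List.mem_toFinset.mp hb
            have hω0 : (0:ℝ) < ω b := lt_of_lt_of_le one_pos (hω b)
            have hrr : bn v q / ω q ≤ bn v b / ω b := hcross b hbP q hq
            have h2 : ω b * bn v b = ω b ^ 2 * (bn v b / ω b) := by field_simp
            rw [h2]
            exact mul_le_mul_of_nonneg_left hrr (sq_nonneg _)
          nlinarith [mul_le_mul_of_nonneg_right hfull hrq0]
        have h3 : bn v q / ω q ≤ NP / (s/2) :=
          (le_div_iff₀ (by linarith : (0:ℝ) < s/2)).mpr (by nlinarith [hkey])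
        have h4 : NP / (s/2) = 2 * NP / s := by
          rw [div_div_eq_mul_div]
          ring_nf
        linarith [h3]
      set mq := 2 * NP / s with hmq
      have hmq0 : 0 ≤ mq := by rw [hmq]; positivity
      have hQlen : Q.length < n := by
        rw [← hn]; exact chunk1_snd_lt ω (by simp) (s/2)
      have hIH := IH Q.length hQlen Q rfl mq hmq0 hndQ hpwQ hNPr
      have hsqs : (0:ℝ) < Real.sqrt s := Real.sqrt_pos.mpr hs0
      have hss : Real.sqrt s * Real.sqrt s = s := Real.mul_self_sqrt hs0.le
      have hsq : Real.sqrt s * mq = 2 / Real.sqrt s * NP := by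
        rw [hmq]
        field_simp
        linear_combination NP * hss
      rw [hNL]
      calc l2 (rs P.toFinset v) + ((chunks ω (s/2) Q).map fun C => l2 (rs C.toFinset v)).sum
          ≤ Real.sqrt s * mm
            + (Real.sqrt s * mq + 2 / Real.sqrt s * ∑ b ∈ Q.toFinset, ω b * bn v b) := by
            linarith [hPnorm, hIH]
        _ = Real.sqrt s * mm
            + 2 / Real.sqrt s * (NP + ∑ b ∈ Q.toFinset, ω b * bn v b) := by
            rw [hsq]; ring

lemma list_sum_le {α : Type*} (l : List α) (f g : α → ℝ) (h : ∀ a ∈ l, f a ≤ g a) :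
    (l.map f).sum ≤ (l.map g).sum := by
  induction l with
  | nil => simp
  | cons a t ih =>
    simp only [List.map_cons, List.sum_cons]
    exact add_le_add (h a (by simp)) (ih fun b hb => h b (List.mem_cons_of_mem _ hb))

lemma list_sum_mul_left {α : Type*} (l : List α) (c : ℝ) (f : α → ℝ) :
    (l.map fun a => c * f a).sum = c * (l.map f).sum := by
  induction l with
  | nil => simp
  | cons a t ih => simp only [List.map_cons, List.sum_cons, ih]; ring

lemma list_sum_neg {α : Type*} (l : List α) (f : α → ℝ) :
    (l.map fun a => - f a).sum = - (l.map f).sum := by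
  induction l with
  | nil => simp
  | cons a t ih => simp only [List.map_cons, List.sum_cons, ih]; ring

lemma nodup_of_mem_join {α : Type*} : ∀ (cs : List (List α)), cs.flatten.Nodup →
    ∀ C ∈ cs, C.Nodup := by
  intro cs
  induction cs with
  | nil => intro _ C hC; simp at hC
  | cons C' cs ih =>
    intro h C hC
    rw [List.flatten_cons] at h
    obtain ⟨h1, h2, _⟩ := List.nodup_append.mp h
    rcases List.mem_cons.mp hC with hC | hC
    · rw [hC]; exact h1
    · exact ih h2 C hC

lemma rs_join (x : ((b : Fin B) × Fin (d b)) → ℝ) : ∀ (cs : List (List (Fin B))),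
    cs.flatten.Nodup → rs cs.flatten.toFinset x = (cs.map fun C => rs C.toFinset x).sum := by
  intro cs
  induction cs with
  | nil => intro _; funext j; simp [rs]
  | cons C cs ih =>
    intro h
    rw [List.flatten_cons] at h ⊢
    obtain ⟨h1, h2, h3⟩ := List.nodup_append.mp h
    have hdisj : Disjoint C.toFinset cs.flatten.toFinset := by
      rw [Finset.disjoint_left]
      intro b hb hb2
      exact h3 _ (List.mem_toFinset.mp hb) _ (List.mem_toFinset.mp hb2) rfl
    rw [List.map_cons, List.sum_cons, ← ih h2, List.toFinset_append, rs_union hdisj]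

lemma mulVec_list_sum {m : ℕ} (A : Matrix (Fin m) ((b : Fin B) × Fin (d b)) ℝ) :
    ∀ (fs : List (((b : Fin B) × Fin (d b)) → ℝ)),
    A.mulVec fs.sum = (fs.map fun f => A.mulVec f).sum := by
  intro fs
  induction fs with
  | nil => simp [Matrix.mulVec_zero]
  | cons f fs ih =>
    simp only [List.sum_cons, List.map_cons, Matrix.mulVec_add, ih]

lemma ip_list_sum {n : Type*} [Fintype n] (p : n → ℝ) : ∀ (fs : List (n → ℝ)),
    ip p fs.sum = (fs.map fun f => ip p f).sum := by
  intro fs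
  induction fs with
  | nil => simp [ip]
  | cons f fs ih => simp only [List.sum_cons, List.map_cons, ip_add_right, ih]

set_option maxHeartbeats 2000000 in
theorem stmt6 {m : ℕ} (A : Matrix (Fin m) ((b : Fin B) × Fin (d b)) ℝ)
    (ω : Fin B → ℝ) (hω : ∀ b, 1 ≤ ω b) (s δ : ℝ)
    (hδ0 : 0 < δ) (hδ : δ < 1 / (2 * Real.sqrt 2 + 1))
    (hs : ∀ b, 2 * ω b ^ 2 ≤ s)
    (hRIP : WBRIP A ω (2 * s) δ) :
    (0 < 2 * Real.sqrt 2 * δ / (1 - δ) ∧ 2 * Real.sqrt 2 * δ / (1 - δ) < 1) ∧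
    ∀ (v : ((b : Fin B) × Fin (d b)) → ℝ) (S : Finset (Fin B)), wCard ω S ≤ s →
      l2 (rs S v) ≤ (2 * Real.sqrt 2 * δ / (1 - δ)) / Real.sqrt s * n21 ω (rs Sᶜ v)
        + Real.sqrt (1 + δ) / (1 - δ) * l2 (A.mulVec v) := by
  have h2s : (1:ℝ) ≤ Real.sqrt 2 := by
    rw [show (1:ℝ) = Real.sqrt 1 from (Real.sqrt_one).symm]
    exact Real.sqrt_le_sqrt (by norm_num)
  have hsqrt2 : Real.sqrt 2 ^ 2 = 2 := Real.sq_sqrt (by norm_num)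
  have hδ1 : δ < 1 := lt_of_lt_of_le hδ (by rw [div_le_one (by linarith)]; linarith)
  have h1δ : 0 < 1 - δ := by linarith
  have hρpos : 0 < 2 * Real.sqrt 2 * δ / (1 - δ) :=
    div_pos (by nlinarith) h1δ
  have hρlt : 2 * Real.sqrt 2 * δ / (1 - δ) < 1 := by
    rw [div_lt_one h1δ]
    have h := (lt_div_iff₀ (by linarith : (0:ℝ) < 2 * Real.sqrt 2 + 1)).mp hδ
    nlinarith
  refine ⟨⟨hρpos, hρlt⟩, ?_⟩
  intro v S hS
  have hω0 : ∀ b, (0:ℝ) ≤ ω b := fun b => le_trans zero_le_one (hω b)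
  have hn21nn : 0 ≤ n21 ω (rs Sᶜ v) := n21_nonneg ω hω0 _
  have hAvnn := l2_nonneg (A.mulVec v)
  by_cases hs0 : 0 < s
  swap
  · -- degenerate: Fin B is empty
    have hemp : IsEmpty (Fin B) := by
      by_contra hne
      rw [not_isEmpty_iff] at hne
      obtain ⟨b⟩ := hne
      have h1 := hs b; have h2 := hω b
      push_neg at hs0
      nlinarith
    haveI : IsEmpty ((b : Fin B) × Fin (d b)) := ⟨fun j => hemp.false j.1⟩
    have h1 : l2 (rs S v) = 0 := by
      unfold l2
      rw [Finset.univ_eq_empty, Finset.sum_empty, Real.sqrt_zero]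
    rw [h1]
    refine add_nonneg (mul_nonneg (div_nonneg hρpos.le (Real.sqrt_nonneg _)) hn21nn)
      (mul_nonneg (div_nonneg (Real.sqrt_nonneg _) h1δ.le) hAvnn)
  -- main case
  classical
  have hsqs : 0 < Real.sqrt s := Real.sqrt_pos.mpr hs0
  have hss : Real.sqrt s * Real.sqrt s = s := Real.mul_self_sqrt hs0.le
  have hs20 : (0:ℝ) ≤ s / 2 := by linarith
  have hsq2 : ∀ b, ω b ^ 2 ≤ s / 2 := fun b => by linarith [hs b]
  set le : Fin B → Fin B → Bool := fun a b => decide (bn v b / ω b ≤ bn v a / ω a) with hle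
  set L : List (Fin B) := Sᶜ.toList.mergeSort le with hL
  have hperm : L.Perm Sᶜ.toList := List.mergeSort_perm _ _
  have hndL : L.Nodup := hperm.nodup_iff.mpr (Finset.nodup_toList _)
  have hmemL : ∀ b, b ∈ L ↔ b ∈ Sᶜ := fun b => by
    rw [hperm.mem_iff, Finset.mem_toList]
  have hpwL : L.Pairwise (fun a b => bn v b / ω b ≤ bn v a / ω a) := by
    have htrans : ∀ a b c : Fin B, le a b = true → le b c = true → le a c = true := by
      intro a b c hab hbc
      simp only [hle, decide_eq_true_eq] at hab hbc ⊢
      exact le_trans hbc hab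
    have htotal : ∀ a b : Fin B, (le a b || le b a) = true := by
      intro a b
      simp only [hle, Bool.or_eq_true, decide_eq_true_eq]
      exact le_total _ _
    have h := List.pairwise_mergeSort htrans htotal Sᶜ.toList
    exact h.imp fun hab => by simpa [hle] using hab
  set P := (chunk1 ω L (s/2)).1 with hPdef
  set Q := (chunk1 ω L (s/2)).2 with hQdef
  have happ : P ++ Q = L := chunk1_append ω L (s/2)
  have hndPQ : (P ++ Q).Nodup := by rw [happ]; exact hndL
  obtain ⟨hndP, hndQ, hdisjPQ⟩ := List.nodup_append.mp hndPQ
  have hpwPQ : (P ++ Q).Pairwise (fun a b => bn v b / ω b ≤ bn v a / ω a) := by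
    rw [happ]; exact hpwL
  obtain ⟨hpwP, hpwQ, hcross⟩ := List.pairwise_append.mp hpwPQ
  have hlwP : lw ω P ≤ s := by
    have := chunk1_weight_le ω (s/2) hs20 hsq2 L (s/2) hs20
    linarith
  have hwcP : wCard ω P.toFinset ≤ s := by
    unfold wCard; rw [lw_toFinset hndP]; exact hlwP
  have hdisjSP : Disjoint S P.toFinset := by
    rw [Finset.disjoint_right]
    intro b hb
    have hbL : b ∈ L := by
      rw [← happ]; exact List.mem_append.mpr (Or.inl (List.mem_toFinset.mp hb))
    have := (hmemL b).mp hbL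
    rwa [Finset.mem_compl] at this
  have hdisjSQ : Disjoint S Q.toFinset := by
    rw [Finset.disjoint_right]
    intro b hb
    have hbL : b ∈ L := by
      rw [← happ]; exact List.mem_append.mpr (Or.inr (List.mem_toFinset.mp hb))
    have := (hmemL b).mp hbL
    rwa [Finset.mem_compl] at this
  set T := S ∪ P.toFinset with hT
  have hwcT : wCard ω T ≤ 2 * s := by
    have h1 : wCard ω T = wCard ω S + wCard ω P.toFinset := Finset.sum_union hdisjSP
    linarith
  have hwsrs : ∀ E : Finset (Fin B), wspar ω (rs E v) ≤ wCard ω E := fun E =>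
    wspar_le_wCard hω0 fun b hb => by rw [bn_rs]; exact if_neg hb
  have hwsT : wspar ω (rs T v) ≤ 2 * s := le_trans (hwsrs T) hwcT
  -- chunks of Q
  set Cs := chunks ω (s/2) Q with hCs
  have hjoin : Cs.flatten = Q := chunks_join ω (s/2) Q
  have hndflat : Cs.flatten.Nodup := by rw [hjoin]; exact hndQ
  have hmemCQ : ∀ C ∈ Cs, ∀ b ∈ C, b ∈ Q := by
    intro C hC b hb
    rw [← hjoin]
    exact List.mem_flatten.mpr ⟨C, hC, hb⟩
  have hCfacts : ∀ C ∈ Cs, Disjoint S C.toFinset ∧ Disjoint P.toFinset C.toFinset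
      ∧ wCard ω C.toFinset ≤ s := by
    intro C hC
    have hndC : C.Nodup := nodup_of_mem_join Cs hndflat C hC
    refine ⟨?_, ?_, ?_⟩
    · rw [Finset.disjoint_right]
      intro b hb
      have hbQ := hmemCQ C hC b (List.mem_toFinset.mp hb)
      exact Finset.disjoint_right.mp hdisjSQ (List.mem_toFinset.mpr hbQ)
    · rw [Finset.disjoint_right]
      intro b hb
      have hbQ := hmemCQ C hC b (List.mem_toFinset.mp hb)
      intro hbP
      exact hdisjPQ _ (List.mem_toFinset.mp hbP) _ hbQ rfl
    · unfold wCard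
      rw [lw_toFinset hndC]
      have := chunks_weight ω (s/2) hs20 hsq2 (s/2) hs20 Q C hC
      linarith
  -- decomposition of v
  have hdisjTQ : Disjoint T Q.toFinset := by
    rw [Finset.disjoint_left]
    intro b hb hbQ
    rcases Finset.mem_union.mp hb with h | h
    · exact Finset.disjoint_left.mp hdisjSQ h hbQ
    · exact hdisjPQ _ (List.mem_toFinset.mp h) _ (List.mem_toFinset.mp hbQ) rfl
  have huniv : T ∪ Q.toFinset = Finset.univ := by
    ext b
    simp only [Finset.mem_union, Finset.mem_univ, iff_true]
    by_cases hbS : b ∈ S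
    · exact Or.inl (Finset.mem_union.mpr (Or.inl hbS))
    · have hbL : b ∈ L := (hmemL b).mpr (Finset.mem_compl.mpr hbS)
      rw [← happ] at hbL
      rcases List.mem_append.mp hbL with h | h
      · exact Or.inl (Finset.mem_union.mpr (Or.inr (List.mem_toFinset.mpr h)))
      · exact Or.inr (List.mem_toFinset.mpr h)
  have hrsuniv : rs Finset.univ v = v := by
    funext j; simp [rs]
  have hdec : v = rs T v + (Cs.map fun C => rs C.toFinset v).sum := by
    have h1 : rs Q.toFinset v = (Cs.map fun C => rs C.toFinset v).sum := by
      have := rs_join v Cs hndflat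
      rw [hjoin] at this
      exact this
    rw [← h1, ← rs_union hdisjTQ, huniv, hrsuniv]
  -- energy estimate
  set p := A.mulVec (rs T v) with hp
  have hAv : A.mulVec v = p + (Cs.map fun C => A.mulVec (rs C.toFinset v)).sum := by
    conv_lhs => rw [hdec]
    rw [Matrix.mulVec_add, mulVec_list_sum, List.map_map]
    rfl
  have hsum : ip p (A.mulVec v)
      = ip p p + (Cs.map fun C => ip p (A.mulVec (rs C.toFinset v))).sum := by
    rw [hAv, ip_add_right, ip_list_sum, List.map_map]
    rfl
  set c0 := l2 (rs T v) with hc0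
  have hc0nn : 0 ≤ c0 := l2_nonneg _
  have hlow : (1 - δ) * c0 ^ 2 ≤ l2 p ^ 2 := (hRIP (rs T v) hwsT).1
  have hc0sq : l2 (rs S v) ^ 2 + l2 (rs P.toFinset v) ^ 2 = c0 ^ 2 := by
    rw [hc0, hT]
    exact (l2_rs_union_sq hdisjSP v).symm
  have hTsplit : rs T v = rs S v + rs P.toFinset v := by
    rw [hT]; exact rs_union hdisjSP v
  have hab : l2 (rs S v) + l2 (rs P.toFinset v) ≤ Real.sqrt 2 * c0 := by
    refine le_of_sq_le_sq' (mul_nonneg (Real.sqrt_nonneg _) hc0nn) ?_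
      (add_nonneg (l2_nonneg _) (l2_nonneg _))
    rw [mul_pow, hsqrt2]
    nlinarith [sq_nonneg (l2 (rs S v) - l2 (rs P.toFinset v)), hc0sq]
  have hcrossbound : ∀ C ∈ Cs,
      - ip p (A.mulVec (rs C.toFinset v)) ≤ Real.sqrt 2 * δ * c0 * l2 (rs C.toFinset v) := by
    intro C hC
    obtain ⟨hdS, hdP, hwC⟩ := hCfacts C hC
    have hb1 := polarization hδ0.le hω0 hRIP hdS
      (by linarith : wCard ω S + wCard ω C.toFinset ≤ 2 * s) v v
    have hb2 := polarization hδ0.le hω0 hRIP hdP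
      (by linarith : wCard ω P.toFinset + wCard ω C.toFinset ≤ 2 * s) v v
    have hip : ip p (A.mulVec (rs C.toFinset v))
        = ip (A.mulVec (rs S v)) (A.mulVec (rs C.toFinset v))
          + ip (A.mulVec (rs P.toFinset v)) (A.mulVec (rs C.toFinset v)) := by
      rw [hp, hTsplit, Matrix.mulVec_add, ip_add_left]
    have htri : |ip p (A.mulVec (rs C.toFinset v))|
        ≤ |ip (A.mulVec (rs S v)) (A.mulVec (rs C.toFinset v))|
          + |ip (A.mulVec (rs P.toFinset v)) (A.mulVec (rs C.toFinset v))| := by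
      rw [hip]; exact abs_add_le _ _
    have ht := l2_nonneg (rs C.toFinset v)
    have h5 : (l2 (rs S v) + l2 (rs P.toFinset v)) * l2 (rs C.toFinset v)
        ≤ (Real.sqrt 2 * c0) * l2 (rs C.toFinset v) := mul_le_mul_of_nonneg_right hab ht
    have h7 : |ip p (A.mulVec (rs C.toFinset v))|
        ≤ δ * ((l2 (rs S v) + l2 (rs P.toFinset v)) * l2 (rs C.toFinset v)) := by
      calc |ip p (A.mulVec (rs C.toFinset v))|
          ≤ |ip (A.mulVec (rs S v)) (A.mulVec (rs C.toFinset v))|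
            + |ip (A.mulVec (rs P.toFinset v)) (A.mulVec (rs C.toFinset v))| := htri
        _ ≤ δ * l2 (rs S v) * l2 (rs C.toFinset v)
            + δ * l2 (rs P.toFinset v) * l2 (rs C.toFinset v) := add_le_add hb1 hb2
        _ = δ * ((l2 (rs S v) + l2 (rs P.toFinset v)) * l2 (rs C.toFinset v)) := by ring
    have h8 := mul_le_mul_of_nonneg_left h5 hδ0.le
    calc - ip p (A.mulVec (rs C.toFinset v))
        ≤ |ip p (A.mulVec (rs C.toFinset v))| := neg_le_abs _
      _ ≤ δ * ((l2 (rs S v) + l2 (rs P.toFinset v)) * l2 (rs C.toFinset v)) := h7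
      _ ≤ δ * (Real.sqrt 2 * c0 * l2 (rs C.toFinset v)) := h8
      _ = Real.sqrt 2 * δ * c0 * l2 (rs C.toFinset v) := by ring
  -- chunk sum bound
  have hLS : L.toFinset = Sᶜ := by
    ext b; rw [List.mem_toFinset, hmemL]
  set NSc := ∑ b ∈ Sᶜ, ω b * bn v b with hNSc
  set NP := ∑ b ∈ P.toFinset, ω b * bn v b with hNP
  set NQ := ∑ b ∈ Q.toFinset, ω b * bn v b with hNQ
  have hterm_nn : ∀ (E : Finset (Fin B)), 0 ≤ ∑ b ∈ E, ω b * bn v b := fun E =>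
    Finset.sum_nonneg fun b _ => mul_nonneg (hω0 b) (bn_nonneg v b)
  have hNsplit : NSc = NP + NQ := by
    rw [hNSc, ← hLS, ← happ, List.toFinset_append]
    refine Finset.sum_union ?_
    rw [Finset.disjoint_left]
    intro b hbP hbQ
    exact hdisjPQ _ (List.mem_toFinset.mp hbP) _ (List.mem_toFinset.mp hbQ) rfl
  have hchsum : (Cs.map fun C => l2 (rs C.toFinset v)).sum ≤ (2 / Real.sqrt s) * NSc := by
    by_cases hQnil : Q = []
    · rw [hCs, hQnil, chunks_nil]
      simp only [List.map_nil, List.sum_nil]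
      have := hterm_nn Sᶜ
      positivity
    · have hfull : s / 2 ≤ lw ω P := chunk1_full ω L (s/2) hQnil
      set mq := 2 * NP / s with hmq
      have hNP0 : 0 ≤ NP := hterm_nn _
      have hmq0 : 0 ≤ mq := by rw [hmq]; positivity
      have hNPr : ∀ q ∈ Q, bn v q / ω q ≤ mq := by
        intro q hq
        have hrq0 : 0 ≤ bn v q / ω q := div_nonneg (bn_nonneg v q) (hω0 q)
        have hkey : (s / 2) * (bn v q / ω q) ≤ NP := by
          have h1 : (lw ω P) * (bn v q / ω q) ≤ NP := by
            rw [hNP, ← lw_toFinset hndP, Finset.sum_mul]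
            refine Finset.sum_le_sum fun b hb => ?_
            have hbP := List.mem_toFinset.mp hb
            have hω0b : (0:ℝ) < ω b := lt_of_lt_of_le one_pos (hω b)
            have hrr : bn v q / ω q ≤ bn v b / ω b := hcross b hbP q hq
            have h2 : ω b * bn v b = ω b ^ 2 * (bn v b / ω b) := by field_simp
            rw [h2]
            exact mul_le_mul_of_nonneg_left hrr (sq_nonneg _)
          nlinarith [mul_le_mul_of_nonneg_right hfull hrq0]
        have h3 : bn v q / ω q ≤ NP / (s/2) :=
          (le_div_iff₀ (by linarith : (0:ℝ) < s/2)).mpr (by nlinarith [hkey])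
        have h4 : NP / (s/2) = 2 * NP / s := by
          rw [div_div_eq_mul_div]; ring_nf
        linarith [h3]
      have hG := chunkSum_le hω hs hs0 Q.length Q rfl mq hmq0 hndQ hpwQ hNPr
      have hsq : Real.sqrt s * mq = 2 / Real.sqrt s * NP := by
        rw [hmq]
        field_simp
        linear_combination NP * hss
      rw [hCs]
      calc ((chunks ω (s/2) Q).map fun C => l2 (rs C.toFinset v)).sum
          ≤ Real.sqrt s * mq + 2 / Real.sqrt s * NQ := hG
        _ = 2 / Real.sqrt s * (NP + NQ) := by rw [hsq]; ring
        _ = 2 / Real.sqrt s * NSc := by rw [hNsplit]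
  -- put things together
  have hipAv : ip p (A.mulVec v) ≤ Real.sqrt (1 + δ) * c0 * l2 (A.mulVec v) := by
    calc ip p (A.mulVec v) ≤ l2 p * l2 (A.mulVec v) := ip_le _ _
      _ ≤ (Real.sqrt (1 + δ) * c0) * l2 (A.mulVec v) :=
          mul_le_mul_of_nonneg_right (rip_upper_sqrt hδ0.le hRIP hwsT) hAvnn
  have hsumbound : (Cs.map fun C => - ip p (A.mulVec (rs C.toFinset v))).sum
      ≤ Real.sqrt 2 * δ * c0 * ((2 / Real.sqrt s) * NSc) := by
    calc (Cs.map fun C => - ip p (A.mulVec (rs C.toFinset v))).sum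
        ≤ (Cs.map fun C => Real.sqrt 2 * δ * c0 * l2 (rs C.toFinset v)).sum :=
          list_sum_le _ _ _ hcrossbound
      _ = Real.sqrt 2 * δ * c0 * (Cs.map fun C => l2 (rs C.toFinset v)).sum :=
          list_sum_mul_left _ _ _
      _ ≤ Real.sqrt 2 * δ * c0 * ((2 / Real.sqrt s) * NSc) := by
          exact mul_le_mul_of_nonneg_left hchsum
            (mul_nonneg (mul_nonneg (Real.sqrt_nonneg 2) hδ0.le) hc0nn)
  have hmain : (1 - δ) * c0 ^ 2
      ≤ Real.sqrt (1 + δ) * c0 * l2 (A.mulVec v)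
        + Real.sqrt 2 * δ * c0 * ((2 / Real.sqrt s) * NSc) := by
    have e1 : l2 p ^ 2 = ip p p := l2_sq_eq_ip p
    have e2 := list_sum_neg Cs (fun C => ip p (A.mulVec (rs C.toFinset v)))
    have : (Cs.map fun C => ip p (A.mulVec (rs C.toFinset v))).sum
        ≥ - (Real.sqrt 2 * δ * c0 * ((2 / Real.sqrt s) * NSc)) := by
      linarith [hsumbound, e2]
    linarith [hlow, hipAv, hsum, e1, this]
  -- final algebra
  rw [n21_rs, ← hNSc]
  have haS : l2 (rs S v) ≤ c0 := by
    refine le_of_sq_le_sq' hc0nn ?_ (l2_nonneg _)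
    nlinarith [sq_nonneg (l2 (rs P.toFinset v)), hc0sq]
  by_cases hc00 : c0 = 0
  · have h0 : l2 (rs S v) = 0 := le_antisymm (hc00 ▸ haS) (l2_nonneg _)
    rw [h0]
    refine add_nonneg (mul_nonneg (div_nonneg hρpos.le hsqs.le) ?_)
      (mul_nonneg (div_nonneg (Real.sqrt_nonneg _) h1δ.le) hAvnn)
    exact hterm_nn Sᶜ
  · have hc0pos : 0 < c0 := lt_of_le_of_ne hc0nn (Ne.symm hc00)
    set X := Real.sqrt (1 + δ) * l2 (A.mulVec v)
      + Real.sqrt 2 * δ * ((2 / Real.sqrt s) * NSc) with hX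
    have hdiv : (1 - δ) * c0 ≤ X := by
      have h := (mul_le_mul_iff_of_pos_right hc0pos).mp
        (show ((1 - δ) * c0) * c0 ≤ X * c0 by rw [hX]; nlinarith [hmain])
      exact h
    have hfinal : c0 ≤ X / (1 - δ) := by
      rw [le_div_iff₀ h1δ]
      nlinarith [hdiv]
    have hXeq : X / (1 - δ)
        = 2 * Real.sqrt 2 * δ / (1 - δ) / Real.sqrt s * NSc
          + Real.sqrt (1 + δ) / (1 - δ) * l2 (A.mulVec v) := by
      rw [hX]
      field_simp
      ring
    calc l2 (rs S v) ≤ c0 := haS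
      _ ≤ X / (1 - δ) := hfinal
      _ = _ := hXeq
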